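/- arXiv:2308.15478 — 2 statements merged into one kernel-verified Lean document; each statement's English description precedes it below -/
import Mathlib

section
/- Let ω₁ and ω₂ be admissible penalties and let d ≥ 0. Then the infimum of ω₁(s₁) + ω₂(s₂) + σ² over all s₁ ≥ 1, s₂ ≥ 1, σ ≥ 0 satisfying s₁ σ s₂ = d equals inf_{z ≥ 1} ((ω₁ ⊕ ω₂)(z) + d²/z²), i.e. the scalar effective penalty of the joint penalty evaluated at d. -/
open Matrix Set

noncomputable section

/-- An admissible penalty: nonnegative, minimized at `ω 1 = 0`, strictly decreasing on `(0,1]`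
and strictly increasing on `[1,∞)`. -/
def Admissible (ω : ℝ → ℝ) : Prop :=
  (∀ x, 0 ≤ ω x) ∧ ω 1 = 0 ∧ StrictAntiOn ω (Set.Ioc 0 1) ∧ StrictMonoOn ω (Set.Ici 1)

/-- The scalar effective penalty `ω̃ v = inf_{z ≥ 1} (ω z + v² / z²)`. -/
def effPenalty (ω : ℝ → ℝ) (v : ℝ) : ℝ :=
  sInf ((fun z => ω z + v ^ 2 / z ^ 2) '' Set.Ici (1 : ℝ))

/-- The joint penalty `(ω₁ ⊕ ω₂) v = inf_{1 ≤ z ≤ v} (ω₁ z + ω₂ (v / z))`. -/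
def jointPenalty (ω₁ ω₂ : ℝ → ℝ) (v : ℝ) : ℝ :=
  sInf ((fun z => ω₁ z + ω₂ (v / z)) '' Set.Icc (1 : ℝ) v)

/-- The (unordered) singular values of a real `P × Q` matrix: square roots of the
eigenvalues of `Xᴴ X`. -/
def svals {P Q : ℕ} (X : Matrix (Fin P) (Fin Q) ℝ) (j : Fin Q) : ℝ :=
  Real.sqrt ((show (Xᵀ * X).IsHermitian by
    simpa using Matrix.isHermitian_conjTranspose_mul_self X).eigenvalues j)

/-- Singular values sorted in decreasing order: `svalsDesc X j` is the `j`-th largest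
singular value of `X`. -/
def svalsDesc {P Q : ℕ} (X : Matrix (Fin P) (Fin Q) ℝ) (j : Fin Q) : ℝ :=
  svals X (Tuple.sort (fun i => - svals X i) j)

/-- The spectral penalty `Ω_ω M = Σ_j ω (σ_j M)`. -/
def specPenalty (ω : ℝ → ℝ) {P : ℕ} (M : Matrix (Fin P) (Fin P) ℝ) : ℝ :=
  ∑ j, ω (svals M j)

/-- Frobenius norm squared. -/
def frobSq {P Q : ℕ} (X : Matrix (Fin P) (Fin Q) ℝ) : ℝ :=
  ∑ i, ∑ j, X i j ^ 2

/-- Euclidean norm of a vector. -/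
def enorm2 {P : ℕ} (v : Fin P → ℝ) : ℝ :=
  Real.sqrt (∑ j, v j ^ 2)

/-- The induced effective spectral penalty `Ω̃_g B = Σ_{j=1}^{min(P,Q)} g̃(σ_j B)`. -/
def effSpec (g : ℝ → ℝ) {P Q : ℕ} (B : Matrix (Fin P) (Fin Q) ℝ) : ℝ :=
  ∑ j : Fin (min P Q), effPenalty g (svalsDesc B (Fin.castLE (min_le_right P Q) j))

/-- The three-factor scalar problem `min ω₁(s₁) + ω₂(s₂) + σ²` subject to
`s₁ σ s₂ = d` has optimal value equal to the scalar effective penalty of the joint penalty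
evaluated at `d`. -/
theorem three_factor_effective_penalty (ω₁ ω₂ : ℝ → ℝ)
    (hω₁ : Admissible ω₁) (hω₂ : Admissible ω₂) (d : ℝ) (hd : 0 ≤ d) :
    sInf {t : ℝ | ∃ s₁ s₂ σ : ℝ, 1 ≤ s₁ ∧ 1 ≤ s₂ ∧ 0 ≤ σ ∧ s₁ * σ * s₂ = d ∧
        t = ω₁ s₁ + ω₂ s₂ + σ ^ 2} =
      effPenalty (jointPenalty ω₁ ω₂) d := by
  set A : Set ℝ := {t : ℝ | ∃ s₁ s₂ σ : ℝ, 1 ≤ s₁ ∧ 1 ≤ s₂ ∧ 0 ≤ σ ∧ s₁ * σ * s₂ = d ∧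
        t = ω₁ s₁ + ω₂ s₂ + σ ^ 2} with hA
  set B : Set ℝ := (fun z => jointPenalty ω₁ ω₂ z + d ^ 2 / z ^ 2) '' Set.Ici (1 : ℝ) with hB
  have hAne : A.Nonempty := ⟨ω₁ 1 + ω₂ 1 + d ^ 2, 1, 1, d, le_refl 1, le_refl 1, hd, by ring,
    rfl⟩
  have hBne : B.Nonempty := ⟨_, Set.mem_image_of_mem _ (Set.self_mem_Ici)⟩
  have hAnn : ∀ t ∈ A, (0 : ℝ) ≤ t := by
    rintro t ⟨s₁, s₂, σ, _, _, _, _, rfl⟩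
    have := hω₁.1 s₁; have := hω₂.1 s₂; positivity
  have hjnn : ∀ z : ℝ, 0 ≤ jointPenalty ω₁ ω₂ z := by
    intro z
    apply Real.sInf_nonneg
    rintro x ⟨w, _, rfl⟩
    have := hω₁.1 w; have := hω₂.1 (z / w); positivity
  have hBnn : ∀ t ∈ B, (0 : ℝ) ≤ t := by
    rintro t ⟨z, _, rfl⟩
    have := hjnn z; positivity
  have hAbdd : BddBelow A := ⟨0, hAnn⟩
  have hBbdd : BddBelow B := ⟨0, hBnn⟩
  show sInf A = sInf B
  apply le_antisymm
  · -- sInf A ≤ each element of B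
    apply le_csInf hBne
    rintro b ⟨z, hz, rfl⟩
    have hz0 : (0 : ℝ) < z := lt_of_lt_of_le one_pos hz
    -- sInf A - d²/z² is a lower bound of the inner set
    have key : sInf A - d ^ 2 / z ^ 2 ≤ jointPenalty ω₁ ω₂ z := by
      apply le_csInf ⟨_, Set.mem_image_of_mem _ (Set.mem_Icc.mpr ⟨le_refl 1, hz⟩)⟩
      rintro x ⟨w, ⟨hw1, hwz⟩, rfl⟩
      have hw0 : (0 : ℝ) < w := lt_of_lt_of_le one_pos hw1
      have hmem : ω₁ w + ω₂ (z / w) + (d / z) ^ 2 ∈ A := by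
        refine ⟨w, z / w, d / z, hw1, ?_, by positivity, ?_, by ring⟩
        · rw [le_div_iff₀ hw0]; simpa using hwz
        · field_simp
      have := csInf_le hAbdd hmem
      have hdz : (d / z) ^ 2 = d ^ 2 / z ^ 2 := by ring
      linarith [this, hdz ▸ this]
    linarith
  · -- sInf B ≤ each element of A
    apply le_csInf hAne
    rintro a ⟨s₁, s₂, σ, hs₁, hs₂, hσ, hprod, rfl⟩
    set z := s₁ * s₂ with hzdef
    have hz1 : (1 : ℝ) ≤ z := by nlinarith
    have hz0 : (0 : ℝ) < z := lt_of_lt_of_le one_pos hz1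
    have hs₁0 : (0 : ℝ) < s₁ := lt_of_lt_of_le one_pos hs₁
    have hmemB : jointPenalty ω₁ ω₂ z + d ^ 2 / z ^ 2 ∈ B := ⟨z, hz1, rfl⟩
    have h1 : sInf B ≤ jointPenalty ω₁ ω₂ z + d ^ 2 / z ^ 2 := csInf_le hBbdd hmemB
    have h2 : jointPenalty ω₁ ω₂ z ≤ ω₁ s₁ + ω₂ s₂ := by
      have hmem : ω₁ s₁ + ω₂ (z / s₁) ∈ (fun w => ω₁ w + ω₂ (z / w)) '' Set.Icc (1 : ℝ) z := by
        refine ⟨s₁, ⟨hs₁, ?_⟩, rfl⟩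
        calc s₁ = s₁ * 1 := by ring
        _ ≤ s₁ * s₂ := by nlinarith
      have hzs : z / s₁ = s₂ := by rw [hzdef]; field_simp
      have hbdd : BddBelow ((fun w => ω₁ w + ω₂ (z / w)) '' Set.Icc (1 : ℝ) z) := by
        refine ⟨0, ?_⟩
        rintro x ⟨w, _, rfl⟩
        have := hω₁.1 w; have := hω₂.1 (z / w); positivity
      have := csInf_le hbdd hmem
      rwa [hzs] at this
    have h3 : d ^ 2 / z ^ 2 = σ ^ 2 := by
      have hdz : d = σ * z := by rw [← hprod, hzdef]; ring
      rw [hdz]; field_simp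
    linarith
end
end

section
/- Let ω be an admissible penalty. Then ω̃(v) = v² + o(v²) as v → 0⁺; precisely, lim_{v → 0⁺} ω̃(v)/v² = 1 (Proposition 3, second part). -/
open Matrix Set

noncomputable section

/-- Proposition 3, second part. `ω̃(v) = v² + o(v²)` as `v → 0⁺`, i.e.
`ω̃(v)/v² → 1`. -/
theorem effPenalty_quadratic_at_zero (ω : ℝ → ℝ) (hω : Admissible ω) :
    Filter.Tendsto (fun v => effPenalty ω v / v ^ 2)
      (nhdsWithin 0 (Set.Ioi 0)) (nhds 1) := by
  obtain ⟨hnn, h1, hanti, hmono⟩ := hω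
  rw [Metric.tendsto_nhdsWithin_nhds]
  intro ε hε
  set ε' : ℝ := min (ε/2) (1/2) with hε'def
  have hε'pos : 0 < ε' := lt_min (by linarith) (by norm_num)
  have hε'lt1 : ε' < 1 := lt_of_le_of_lt (min_le_right _ _) (by norm_num)
  set z₀ : ℝ := 1 / Real.sqrt (1 - ε') with hz₀def
  have h1ε : 0 < 1 - ε' := by linarith
  have hsq : Real.sqrt (1 - ε') < 1 := by
    nlinarith [Real.sq_sqrt h1ε.le, Real.sqrt_nonneg (1 - ε')]
  have hsqpos : 0 < Real.sqrt (1 - ε') := Real.sqrt_pos.mpr h1ε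
  have hz₀gt : 1 < z₀ := by
    rw [hz₀def, lt_div_iff₀ hsqpos]; linarith
  have hωz₀ : 0 < ω z₀ := by
    have := hmono (self_mem_Ici) (le_of_lt hz₀gt) hz₀gt
    rwa [h1] at this
  refine ⟨Real.sqrt (ω z₀), Real.sqrt_pos.mpr hωz₀, ?_⟩
  intro v hv hdist
  have hvpos : 0 < v := hv
  have hv2 : v^2 < ω z₀ := by
    have habs : |v| < Real.sqrt (ω z₀) := by
      simpa [Real.dist_eq] using hdist
    calc v^2 = |v|^2 := (sq_abs v).symm
    _ < Real.sqrt (ω z₀)^2 := by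
        exact pow_lt_pow_left₀ habs (abs_nonneg v) (by norm_num)
    _ = ω z₀ := Real.sq_sqrt hωz₀.le
  have hne : ((fun z => ω z + v ^ 2 / z ^ 2) '' Set.Ici (1 : ℝ)).Nonempty :=
    ⟨_, mem_image_of_mem _ (self_mem_Ici)⟩
  have hbdd : BddBelow ((fun z => ω z + v ^ 2 / z ^ 2) '' Set.Ici (1 : ℝ)) := by
    refine ⟨0, ?_⟩
    rintro x ⟨z, hz, rfl⟩
    have hzpos : (0:ℝ) < z := lt_of_lt_of_le one_pos hz
    have := hnn z
    positivity
  have hub : effPenalty ω v ≤ v ^ 2 := by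
    have := csInf_le hbdd (mem_image_of_mem _ (self_mem_Ici (a := (1:ℝ))))
    simpa [effPenalty, h1] using this
  have hlb : (1 - ε') * v ^ 2 ≤ effPenalty ω v := by
    apply le_csInf hne
    rintro x ⟨z, hz, rfl⟩
    rcases le_or_gt z z₀ with hcase | hcase
    · have hzpos : (0:ℝ) < z := lt_of_lt_of_le one_pos hz
      have hdiv : v^2 / z₀^2 ≤ v^2 / z^2 := by
        apply div_le_div_of_nonneg_left (by positivity) (by positivity)
        exact pow_le_pow_left₀ hzpos.le hcase 2
      have hz₀sq : z₀^2 = 1/(1-ε') := by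
        rw [hz₀def, div_pow, one_pow, Real.sq_sqrt h1ε.le]
      have hkey : (1-ε')*v^2 ≤ v^2/z^2 := by
        calc (1-ε')*v^2 = v^2 / z₀^2 := by rw [hz₀sq]; field_simp
        _ ≤ v^2/z^2 := hdiv
      linarith [hnn z]
    · have hle : ω z₀ ≤ ω z :=
        (hmono (le_of_lt hz₀gt) (le_trans hz₀gt.le hcase.le) hcase).le
      have hzpos : (0:ℝ) < z := lt_of_lt_of_le one_pos hz
      have hd : 0 ≤ v^2/z^2 := by positivity
      nlinarith
  rw [Real.dist_eq]
  have hv2pos : 0 < v^2 := by positivity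
  have h1' : effPenalty ω v / v^2 ≤ 1 := by
    rw [div_le_one hv2pos]; exact hub
  have h2' : 1 - ε' ≤ effPenalty ω v / v^2 := by
    rw [le_div_iff₀ hv2pos]; exact hlb
  have habs : |effPenalty ω v / v^2 - 1| ≤ ε' := by
    rw [abs_le]; constructor <;> linarith
  calc |effPenalty ω v / v^2 - 1| ≤ ε' := habs
  _ ≤ ε/2 := min_le_left _ _
  _ < ε := by linarith
end
end
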